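/- Assume R₁, R₂, R₃ are pairwise distinct and R₂ − R₃ + R₃q₃/r₃ ≠ 0. Then every point x ∈ ℝ⁶ with all six coordinates nonnegative satisfying F(x) = 0 is equal to one of the following four points: (a) the origin X₀ = 0; (b) X₃ = (0, 0, 1−1/R₃, 0, 0, (R₃−1)δ₃/α₃); (c) X₂ = (0, ȳ₂, ȳ₃, 0, v̄₂, v̄₃) with v̄₂ = (q₂/c)·(R₂−1)(R₂−R₃)/(R₂(R₂−R₃+R₃q₃/r₃)), v̄₃ = (q₃/q₂)·(R₂/(R₂−R₃))·v̄₂, ȳ₂ = (c/q₂)v̄₂, ȳ₃ = (c/r₃)·(R₃/R₂)·v̄₃; (d) X₁ = (ŷ₁, ŷ₂, ŷ₃, v̂₁, v̂₂, v̂₃) with ŷ₁ = (1−1/R₁)/(1 + (p₂/q₂)·R₂/(R₁−R₂) + (p₂q₃/(q₂r₃))·R₂R₃/((R₁−R₂)(R₁−R₃))), ŷ₂ = (p₂/q₂)·(R₂/(R₁−R₂))·ŷ₁, ŷ₃ = (p₂q₃/(q₂r₃))·(R₂R₃/((R₁−R₂)(R₁−R₃)))·ŷ₁, v̂₁ = (p₁/c)ŷ₁,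 v̂₂ = (p₂ŷ₁+q₂ŷ₂)/c, v̂₃ = (q₃ŷ₂+r₃ŷ₃)/c. -/

import Mathlib

/-- The HBV three-strain vector field `F(y₁,y₂,y₃,v₁,v₂,v₃)`, with `β = 1 − y₁ − y₂ − y₃`. -/
noncomputable def Fhbv (α₁ α₂ α₃ δ₁ δ₂ δ₃ c p₁ p₂ q₂ q₃ r₃ : ℝ) (x : Fin 6 → ℝ) :
    Fin 6 → ℝ :=
  ![α₁ * (1 - x 0 - x 1 - x 2) * x 3 - δ₁ * x 0,
    α₂ * (1 - x 0 - x 1 - x 2) * x 4 - δ₂ * x 1,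
    α₃ * (1 - x 0 - x 1 - x 2) * x 5 - δ₃ * x 2,
    p₁ * x 0 - c * x 3,
    p₂ * x 0 + q₂ * x 1 - c * x 4,
    q₃ * x 1 + r₃ * x 2 - c * x 5]

set_option maxHeartbeats 1600000 in
/-- if R₁, R₂, R₃ are pairwise distinct and R₂ − R₃ + R₃q₃/r₃ ≠ 0, then
every coordinatewise-nonnegative zero of F equals one of X₀, X₃, X₂, X₁ (with the
explicit coordinates as stated). -/
theorem stmt_13 (α₁ α₂ α₃ δ₁ δ₂ δ₃ c p₁ p₂ q₂ q₃ r₃ : ℝ)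
    (hα₁ : 0 < α₁) (hα₂ : 0 < α₂) (hα₃ : 0 < α₃)
    (hδ₁ : 0 < δ₁) (hδ₂ : 0 < δ₂) (hδ₃ : 0 < δ₃) (hc : 0 < c)
    (hp₁ : 0 < p₁) (hp₂ : 0 < p₂) (hq₂ : 0 < q₂) (hq₃ : 0 < q₃) (hr₃ : 0 < r₃)
    (h12 : α₁ * p₁ / (c * δ₁) ≠ α₂ * q₂ / (c * δ₂))
    (h13 : α₁ * p₁ / (c * δ₁) ≠ α₃ * r₃ / (c * δ₃))
    (h23 : α₂ * q₂ / (c * δ₂) ≠ α₃ * r₃ / (c * δ₃))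
    (hden : α₂ * q₂ / (c * δ₂) - α₃ * r₃ / (c * δ₃) +
      (α₃ * r₃ / (c * δ₃)) * q₃ / r₃ ≠ 0) :
    let R₁ : ℝ := α₁ * p₁ / (c * δ₁)
    let R₂ : ℝ := α₂ * q₂ / (c * δ₂)
    let R₃ : ℝ := α₃ * r₃ / (c * δ₃)
    -- the four candidate equilibria
    let X₀ : Fin 6 → ℝ := 0
    let X₃ : Fin 6 → ℝ := ![0, 0, 1 - 1 / R₃, 0, 0, (R₃ - 1) * δ₃ / α₃]
    let v₂' : ℝ := (q₂ / c) * ((R₂ - 1) * (R₂ - R₃) / (R₂ * (R₂ - R₃ + R₃ * q₃ / r₃)))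
    let v₃' : ℝ := (q₃ / q₂) * (R₂ / (R₂ - R₃)) * v₂'
    let X₂ : Fin 6 → ℝ := ![0, (c / q₂) * v₂', (c / r₃) * (R₃ / R₂) * v₃', 0, v₂', v₃']
    let y₁ : ℝ := (1 - 1 / R₁) /
      (1 + (p₂ / q₂) * R₂ / (R₁ - R₂) +
        (p₂ * q₃ / (q₂ * r₃)) * (R₂ * R₃ / ((R₁ - R₂) * (R₁ - R₃))))
    let y₂ : ℝ := (p₂ / q₂) * (R₂ / (R₁ - R₂)) * y₁
    let y₃ : ℝ := (p₂ * q₃ / (q₂ * r₃)) * (R₂ * R₃ / ((R₁ - R₂) * (R₁ - R₃))) * y₁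
    let X₁ : Fin 6 → ℝ :=
      ![y₁, y₂, y₃, (p₁ / c) * y₁, (p₂ * y₁ + q₂ * y₂) / c, (q₃ * y₂ + r₃ * y₃) / c]
    ∀ x : Fin 6 → ℝ, (∀ i, 0 ≤ x i) →
      Fhbv α₁ α₂ α₃ δ₁ δ₂ δ₃ c p₁ p₂ q₂ q₃ r₃ x = 0 →
      x = X₀ ∨ x = X₃ ∨ x = X₂ ∨ x = X₁ := by
  intro R₁ R₂ R₃ X₀ X₃ v₂' v₃' X₂ y₁ y₂ y₃ X₁ x hnn hF
  have hc0 : c ≠ 0 := hc.ne'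
  have e1 : α₁ * (1 - x 0 - x 1 - x 2) * x 3 - δ₁ * x 0 = 0 := congrFun hF 0
  have e2 : α₂ * (1 - x 0 - x 1 - x 2) * x 4 - δ₂ * x 1 = 0 := congrFun hF 1
  have e3 : α₃ * (1 - x 0 - x 1 - x 2) * x 5 - δ₃ * x 2 = 0 := congrFun hF 2
  have e4 : p₁ * x 0 - c * x 3 = 0 := congrFun hF 3
  have e5 : p₂ * x 0 + q₂ * x 1 - c * x 4 = 0 := congrFun hF 4
  have e6 : q₃ * x 1 + r₃ * x 2 - c * x 5 = 0 := congrFun hF 5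
  have hR12 : α₁ * p₁ / (c * δ₁) - α₂ * q₂ / (c * δ₂)
      = (α₁ * p₁ * δ₂ - α₂ * q₂ * δ₁) / (c * δ₁ * δ₂) := by field_simp <;> (first | ring1 | (left; (first | trivial | ring1)))
  have hR13 : α₁ * p₁ / (c * δ₁) - α₃ * r₃ / (c * δ₃)
      = (α₁ * p₁ * δ₃ - α₃ * r₃ * δ₁) / (c * δ₁ * δ₃) := by field_simp <;> (first | ring1 | (left; (first | trivial | ring1)))
  have hR23 : α₂ * q₂ / (c * δ₂) - α₃ * r₃ / (c * δ₃)
      = (α₂ * q₂ * δ₃ - α₃ * r₃ * δ₂) / (c * δ₂ * δ₃) := by field_simp <;> (first | ring1 | (left; (first | trivial | ring1)))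
  have hRsum : α₂ * q₂ / (c * δ₂) - α₃ * r₃ / (c * δ₃) + α₃ * r₃ / (c * δ₃) * q₃ / r₃
      = (α₂ * q₂ * δ₃ - α₃ * r₃ * δ₂ + α₃ * q₃ * δ₂) / (c * δ₂ * δ₃) := by field_simp <;> (first | ring1 | (left; (first | trivial | ring1)))
  have hd12 : α₁ * p₁ * δ₂ - α₂ * q₂ * δ₁ ≠ 0 := by
    have h := sub_ne_zero_of_ne h12; rw [hR12] at h
    intro hz; exact h (by rw [hz, zero_div])
  have hd13 : α₁ * p₁ * δ₃ - α₃ * r₃ * δ₁ ≠ 0 := by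
    have h := sub_ne_zero_of_ne h13; rw [hR13] at h
    intro hz; exact h (by rw [hz, zero_div])
  have hd23 : α₂ * q₂ * δ₃ - α₃ * r₃ * δ₂ ≠ 0 := by
    have h := sub_ne_zero_of_ne h23; rw [hR23] at h
    intro hz; exact h (by rw [hz, zero_div])
  have he23 : α₂ * q₂ * δ₃ - α₃ * r₃ * δ₂ + α₃ * q₃ * δ₂ ≠ 0 := by
    have h := hden
    rw [show α₂ * q₂ / (c * δ₂) - α₃ * r₃ / (c * δ₃) + α₃ * r₃ / (c * δ₃) * q₃ / r₃
      = (α₂ * q₂ * δ₃ - α₃ * r₃ * δ₂ + α₃ * q₃ * δ₂) / (c * δ₂ * δ₃) from hRsum] at h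
    intro hz; exact h (by rw [hz, zero_div])
  rcases (hnn 0).eq_or_lt with h0 | h0
  · -- x 0 = 0
    have hx0 : x 0 = 0 := h0.symm
    have hx3 : x 3 = 0 := by
      have h : c * x 3 = 0 := by linear_combination -e4 + p₁ * hx0
      exact (mul_eq_zero.mp h).resolve_left hc0
    rcases (hnn 1).eq_or_lt with h1 | h1
    · -- x 1 = 0
      have hx1 : x 1 = 0 := h1.symm
      have hx4 : x 4 = 0 := by
        have h : c * x 4 = 0 := by linear_combination -e5 + p₂ * hx0 + q₂ * hx1
        exact (mul_eq_zero.mp h).resolve_left hc0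
      rcases (hnn 2).eq_or_lt with h2 | h2
      · -- origin
        have hx2 : x 2 = 0 := h2.symm
        have hx5 : x 5 = 0 := by
          have h : c * x 5 = 0 := by linear_combination -e6 + q₃ * hx1 + r₃ * hx2
          exact (mul_eq_zero.mp h).resolve_left hc0
        left
        funext i; fin_cases i
        · exact hx0
        · exact hx1
        · exact hx2
        · exact hx3
        · exact hx4
        · exact hx5
      · -- X₃ case
        have key : x 2 * (α₃ * r₃ * (1 - x 0 - x 1 - x 2) - c * δ₃) = 0 := by
          linear_combination c * e3 + α₃ * (1 - x 0 - x 1 - x 2) * e6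
            - α₃ * (1 - x 0 - x 1 - x 2) * q₃ * hx1
        have hb : α₃ * r₃ * (1 - x 0 - x 1 - x 2) - c * δ₃ = 0 :=
          (mul_eq_zero.mp key).resolve_left h2.ne'
        have Hx2 : x 2 = 1 - 1 / (α₃ * r₃ / (c * δ₃)) := by
          field_simp
          linear_combination -hb - α₃ * r₃ * hx0 - α₃ * r₃ * hx1
        have Hx5rel : x 5 = r₃ * x 2 / c := by
          rw [eq_div_iff hc0]; linear_combination -e6 + q₃ * hx1
        right; left
        funext i; fin_cases i
        · exact hx0
        · exact hx1
        · exact Hx2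
        · exact hx3
        · exact hx4
        · show x 5 = (α₃ * r₃ / (c * δ₃) - 1) * δ₃ / α₃
          rw [Hx5rel, Hx2]; field_simp <;> (first | ring1 | (left; (first | trivial | ring1)))
    · -- X₂ case : x 1 > 0
      have key : x 1 * (α₂ * q₂ * (1 - x 0 - x 1 - x 2) - c * δ₂) = 0 := by
        linear_combination c * e2 + α₂ * (1 - x 0 - x 1 - x 2) * e5
          - α₂ * (1 - x 0 - x 1 - x 2) * p₂ * hx0
      have hb : α₂ * q₂ * (1 - x 0 - x 1 - x 2) - c * δ₂ = 0 :=
        (mul_eq_zero.mp key).resolve_left h1.ne'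
      have h3c : c * (α₃ * δ₂ * (q₃ * x 1 + r₃ * x 2)) = c * (α₂ * q₂ * δ₃ * x 2) := by
        linear_combination α₂ * q₂ * c * e3 + α₂ * q₂ * α₃ * (1 - x 0 - x 1 - x 2) * e6
          - α₃ * (q₃ * x 1 + r₃ * x 2) * hb
      have hkey : (α₂ * q₂ * δ₃ - α₃ * r₃ * δ₂) * x 2 = α₃ * δ₂ * q₃ * x 1 := by
        linear_combination -mul_left_cancel₀ hc0 h3c
      have hx1val : x 1 * (α₂ * q₂ * (α₂ * q₂ * δ₃ - α₃ * r₃ * δ₂ + α₃ * q₃ * δ₂))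
          = (α₂ * q₂ - c * δ₂) * (α₂ * q₂ * δ₃ - α₃ * r₃ * δ₂) := by
        linear_combination (-(α₂ * q₂ * δ₃ - α₃ * r₃ * δ₂)) * hb - α₂ * q₂ * hkey
          - (α₂ * q₂ * δ₃ - α₃ * r₃ * δ₂) * α₂ * q₂ * hx0
      have Hx1val : x 1 = (α₂ * q₂ - c * δ₂) * (α₂ * q₂ * δ₃ - α₃ * r₃ * δ₂)
          / (α₂ * q₂ * (α₂ * q₂ * δ₃ - α₃ * r₃ * δ₂ + α₃ * q₃ * δ₂)) := by
        rw [eq_div_iff (mul_ne_zero (by positivity) he23)]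
        linear_combination hx1val
      have Hx2rel : x 2 = α₃ * δ₂ * q₃ * x 1 / (α₂ * q₂ * δ₃ - α₃ * r₃ * δ₂) := by
        rw [eq_div_iff hd23]; linear_combination hkey
      have Hx4rel : x 4 = q₂ * x 1 / c := by
        rw [eq_div_iff hc0]; linear_combination -e5 + p₂ * hx0
      have Hx5rel : x 5 = (q₃ * x 1 + r₃ * x 2) / c := by
        rw [eq_div_iff hc0]; linear_combination -e6
      right; right; left
      funext i; fin_cases i
      · exact hx0
      · show x 1 = c / q₂ * (q₂ / c *
          ((α₂ * q₂ / (c * δ₂) - 1) * (α₂ * q₂ / (c * δ₂) - α₃ * r₃ / (c * δ₃)) /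
            (α₂ * q₂ / (c * δ₂) *
              (α₂ * q₂ / (c * δ₂) - α₃ * r₃ / (c * δ₃) + α₃ * r₃ / (c * δ₃) * q₃ / r₃))))
        rw [hRsum, hR23, Hx1val]; field_simp <;> (first | ring1 | (left; (first | trivial | ring1)))
      · show x 2 = c / r₃ * (α₃ * r₃ / (c * δ₃) / (α₂ * q₂ / (c * δ₂))) *
          (q₃ / q₂ * (α₂ * q₂ / (c * δ₂) / (α₂ * q₂ / (c * δ₂) - α₃ * r₃ / (c * δ₃))) *
            (q₂ / c *
              ((α₂ * q₂ / (c * δ₂) - 1) * (α₂ * q₂ / (c * δ₂) - α₃ * r₃ / (c * δ₃)) /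
                (α₂ * q₂ / (c * δ₂) *
                  (α₂ * q₂ / (c * δ₂) - α₃ * r₃ / (c * δ₃) + α₃ * r₃ / (c * δ₃) * q₃ / r₃)))))
        rw [Hx2rel, Hx1val, hRsum, hR23]; field_simp <;> (first | ring1 | (left; (first | trivial | ring1)))
      · exact hx3
      · show x 4 = q₂ / c *
          ((α₂ * q₂ / (c * δ₂) - 1) * (α₂ * q₂ / (c * δ₂) - α₃ * r₃ / (c * δ₃)) /
            (α₂ * q₂ / (c * δ₂) *
              (α₂ * q₂ / (c * δ₂) - α₃ * r₃ / (c * δ₃) + α₃ * r₃ / (c * δ₃) * q₃ / r₃)))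
        rw [Hx4rel, Hx1val, hRsum, hR23]; field_simp <;> (first | ring1 | (left; (first | trivial | ring1)))
      · show x 5 = q₃ / q₂ * (α₂ * q₂ / (c * δ₂) / (α₂ * q₂ / (c * δ₂) - α₃ * r₃ / (c * δ₃))) *
          (q₂ / c *
            ((α₂ * q₂ / (c * δ₂) - 1) * (α₂ * q₂ / (c * δ₂) - α₃ * r₃ / (c * δ₃)) /
              (α₂ * q₂ / (c * δ₂) *
                (α₂ * q₂ / (c * δ₂) - α₃ * r₃ / (c * δ₃) + α₃ * r₃ / (c * δ₃) * q₃ / r₃))))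
        rw [Hx5rel, Hx2rel, Hx1val, hRsum, hR23]; field_simp <;> (first | ring1 | (left; (first | trivial | ring1)))
  · -- X₁ case : x 0 > 0
    have key : x 0 * (α₁ * p₁ * (1 - x 0 - x 1 - x 2) - c * δ₁) = 0 := by
      linear_combination c * e1 + α₁ * (1 - x 0 - x 1 - x 2) * e4
    have hb : α₁ * p₁ * (1 - x 0 - x 1 - x 2) - c * δ₁ = 0 :=
      (mul_eq_zero.mp key).resolve_left h0.ne'
    have h2c : c * (α₂ * δ₁ * (p₂ * x 0 + q₂ * x 1)) = c * (α₁ * p₁ * δ₂ * x 1) := by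
      linear_combination α₁ * p₁ * c * e2 + α₁ * p₁ * α₂ * (1 - x 0 - x 1 - x 2) * e5
        - α₂ * (p₂ * x 0 + q₂ * x 1) * hb
    have hkey2 : (α₁ * p₁ * δ₂ - α₂ * q₂ * δ₁) * x 1 = α₂ * δ₁ * p₂ * x 0 := by
      linear_combination -mul_left_cancel₀ hc0 h2c
    have h3c : c * (α₃ * δ₁ * (q₃ * x 1 + r₃ * x 2)) = c * (α₁ * p₁ * δ₃ * x 2) := by
      linear_combination α₁ * p₁ * c * e3 + α₁ * p₁ * α₃ * (1 - x 0 - x 1 - x 2) * e6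
        - α₃ * (q₃ * x 1 + r₃ * x 2) * hb
    have hkey3 : (α₁ * p₁ * δ₃ - α₃ * r₃ * δ₁) * x 2 = α₃ * δ₁ * q₃ * x 1 := by
      linear_combination -mul_left_cancel₀ hc0 h3c
    have hd12pos : 0 < α₁ * p₁ * δ₂ - α₂ * q₂ * δ₁ := by
      rcases hd12.lt_or_gt with h | h
      · exfalso
        nlinarith [hkey2, hnn 1, mul_pos (mul_pos (mul_pos hα₂ hδ₁) hp₂) h0]
      · exact h
    have hx1pos : 0 < x 1 := by
      rcases (hnn 1).eq_or_lt with h | h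
      · exfalso; rw [← h, mul_zero] at hkey2
        nlinarith [mul_pos (mul_pos (mul_pos hα₂ hδ₁) hp₂) h0]
      · exact h
    have hd13pos : 0 < α₁ * p₁ * δ₃ - α₃ * r₃ * δ₁ := by
      rcases hd13.lt_or_gt with h | h
      · exfalso
        nlinarith [hkey3, hnn 2, mul_pos (mul_pos (mul_pos hα₃ hδ₁) hq₃) hx1pos]
      · exact h
    have hkey23 : (α₁ * p₁ * δ₂ - α₂ * q₂ * δ₁) * ((α₁ * p₁ * δ₃ - α₃ * r₃ * δ₁) * x 2)
        = α₃ * δ₁ * q₃ * (α₂ * δ₁ * p₂ * x 0) := by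
      linear_combination (α₁ * p₁ * δ₂ - α₂ * q₂ * δ₁) * hkey3 + α₃ * δ₁ * q₃ * hkey2
    have hDpos : 0 < (α₁ * p₁ * δ₂ - α₂ * q₂ * δ₁) * (α₁ * p₁ * δ₃ - α₃ * r₃ * δ₁)
        + α₂ * δ₁ * p₂ * (α₁ * p₁ * δ₃ - α₃ * r₃ * δ₁) + α₂ * δ₁ * p₂ * (α₃ * δ₁ * q₃) := by
      have ha := mul_pos hd12pos hd13pos
      have hb2 := mul_pos (show (0:ℝ) < α₂ * δ₁ * p₂ by positivity) hd13pos
      have hc2 : (0:ℝ) < α₂ * δ₁ * p₂ * (α₃ * δ₁ * q₃) := by positivity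
      linarith
    have hx0val : x 0 * (α₁ * p₁ * ((α₁ * p₁ * δ₂ - α₂ * q₂ * δ₁) * (α₁ * p₁ * δ₃ - α₃ * r₃ * δ₁)
          + α₂ * δ₁ * p₂ * (α₁ * p₁ * δ₃ - α₃ * r₃ * δ₁) + α₂ * δ₁ * p₂ * (α₃ * δ₁ * q₃)))
        = (α₁ * p₁ - c * δ₁) *
          ((α₁ * p₁ * δ₂ - α₂ * q₂ * δ₁) * (α₁ * p₁ * δ₃ - α₃ * r₃ * δ₁)) := by
      linear_combination
        (-((α₁ * p₁ * δ₂ - α₂ * q₂ * δ₁) * (α₁ * p₁ * δ₃ - α₃ * r₃ * δ₁))) * hb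
        - α₁ * p₁ * (α₁ * p₁ * δ₃ - α₃ * r₃ * δ₁) * hkey2 - α₁ * p₁ * hkey23
    have Hx0val : x 0 = (α₁ * p₁ - c * δ₁) *
          ((α₁ * p₁ * δ₂ - α₂ * q₂ * δ₁) * (α₁ * p₁ * δ₃ - α₃ * r₃ * δ₁))
        / (α₁ * p₁ * ((α₁ * p₁ * δ₂ - α₂ * q₂ * δ₁) * (α₁ * p₁ * δ₃ - α₃ * r₃ * δ₁)
          + α₂ * δ₁ * p₂ * (α₁ * p₁ * δ₃ - α₃ * r₃ * δ₁) + α₂ * δ₁ * p₂ * (α₃ * δ₁ * q₃))) := by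
      rw [eq_div_iff (mul_ne_zero (by positivity) hDpos.ne')]
      linear_combination hx0val
    have hR12pos : 0 < α₁ * p₁ / (c * δ₁) - α₂ * q₂ / (c * δ₂) := by
      rw [hR12]; exact div_pos hd12pos (by positivity)
    have hR13pos : 0 < α₁ * p₁ / (c * δ₁) - α₃ * r₃ / (c * δ₃) := by
      rw [hR13]; exact div_pos hd13pos (by positivity)
    have hSumpos : 0 < 1 + p₂ / q₂ * (α₂ * q₂ / (c * δ₂)) / (α₁ * p₁ / (c * δ₁) - α₂ * q₂ / (c * δ₂))
        + p₂ * q₃ / (q₂ * r₃) * (α₂ * q₂ / (c * δ₂) * (α₃ * r₃ / (c * δ₃)) /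
          ((α₁ * p₁ / (c * δ₁) - α₂ * q₂ / (c * δ₂)) * (α₁ * p₁ / (c * δ₁) - α₃ * r₃ / (c * δ₃)))) := by
      have t2 : 0 < p₂ / q₂ * (α₂ * q₂ / (c * δ₂)) / (α₁ * p₁ / (c * δ₁) - α₂ * q₂ / (c * δ₂)) :=
        div_pos (by positivity) hR12pos
      have t3 : 0 < p₂ * q₃ / (q₂ * r₃) * (α₂ * q₂ / (c * δ₂) * (α₃ * r₃ / (c * δ₃)) /
          ((α₁ * p₁ / (c * δ₁) - α₂ * q₂ / (c * δ₂)) * (α₁ * p₁ / (c * δ₁) - α₃ * r₃ / (c * δ₃)))) :=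
        mul_pos (by positivity) (div_pos (by positivity) (mul_pos hR12pos hR13pos))
      linarith
    have Hy1 : x 0 = (1 - 1 / (α₁ * p₁ / (c * δ₁))) /
        (1 + p₂ / q₂ * (α₂ * q₂ / (c * δ₂)) / (α₁ * p₁ / (c * δ₁) - α₂ * q₂ / (c * δ₂))
          + p₂ * q₃ / (q₂ * r₃) * (α₂ * q₂ / (c * δ₂) * (α₃ * r₃ / (c * δ₃)) /
            ((α₁ * p₁ / (c * δ₁) - α₂ * q₂ / (c * δ₂)) *
              (α₁ * p₁ / (c * δ₁) - α₃ * r₃ / (c * δ₃))))) := by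
      rw [eq_div_iff hSumpos.ne', Hx0val, hR12, hR13]
      have hD := hDpos.ne'
      generalize α₁ * p₁ * δ₂ - α₂ * q₂ * δ₁ = D12 at hD hd12 ⊢
      generalize α₁ * p₁ * δ₃ - α₃ * r₃ * δ₁ = D13 at hD hd13 ⊢
      field_simp
      have hD' : δ₁ * D13 * α₂ * p₂ + δ₁ ^ 2 * α₂ * p₂ * α₃ * q₃ + D13 * D12 ≠ 0 := by
        convert hD using 1; ring
      linear_combination (α₁ * p₁ - c * δ₁) * mul_inv_cancel₀ hD'
    have Hx1rel : x 1 = α₂ * δ₁ * p₂ * x 0 / (α₁ * p₁ * δ₂ - α₂ * q₂ * δ₁) := by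
      rw [eq_div_iff hd12]; linear_combination hkey2
    have Hx2rel : x 2 = α₃ * δ₁ * q₃ * x 1 / (α₁ * p₁ * δ₃ - α₃ * r₃ * δ₁) := by
      rw [eq_div_iff hd13]; linear_combination hkey3
    have Hx3rel : x 3 = p₁ * x 0 / c := by
      rw [eq_div_iff hc0]; linear_combination -e4
    have Hx4rel : x 4 = (p₂ * x 0 + q₂ * x 1) / c := by
      rw [eq_div_iff hc0]; linear_combination -e5
    have Hx5rel : x 5 = (q₃ * x 1 + r₃ * x 2) / c := by
      rw [eq_div_iff hc0]; linear_combination -e6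
    right; right; right
    funext i; fin_cases i
    · exact Hy1
    · show x 1 = p₂ / q₂ * (α₂ * q₂ / (c * δ₂) / (α₁ * p₁ / (c * δ₁) - α₂ * q₂ / (c * δ₂))) *
        ((1 - 1 / (α₁ * p₁ / (c * δ₁))) /
          (1 + p₂ / q₂ * (α₂ * q₂ / (c * δ₂)) / (α₁ * p₁ / (c * δ₁) - α₂ * q₂ / (c * δ₂))
            + p₂ * q₃ / (q₂ * r₃) * (α₂ * q₂ / (c * δ₂) * (α₃ * r₃ / (c * δ₃)) /
              ((α₁ * p₁ / (c * δ₁) - α₂ * q₂ / (c * δ₂)) *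
                (α₁ * p₁ / (c * δ₁) - α₃ * r₃ / (c * δ₃))))))
      rw [← Hy1, Hx1rel, hR12]
      field_simp
    · show x 2 = p₂ * q₃ / (q₂ * r₃) * (α₂ * q₂ / (c * δ₂) * (α₃ * r₃ / (c * δ₃)) /
          ((α₁ * p₁ / (c * δ₁) - α₂ * q₂ / (c * δ₂)) *
            (α₁ * p₁ / (c * δ₁) - α₃ * r₃ / (c * δ₃)))) *
        ((1 - 1 / (α₁ * p₁ / (c * δ₁))) /
          (1 + p₂ / q₂ * (α₂ * q₂ / (c * δ₂)) / (α₁ * p₁ / (c * δ₁) - α₂ * q₂ / (c * δ₂))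
            + p₂ * q₃ / (q₂ * r₃) * (α₂ * q₂ / (c * δ₂) * (α₃ * r₃ / (c * δ₃)) /
              ((α₁ * p₁ / (c * δ₁) - α₂ * q₂ / (c * δ₂)) *
                (α₁ * p₁ / (c * δ₁) - α₃ * r₃ / (c * δ₃))))))
      rw [← Hy1, Hx2rel, Hx1rel, hR12, hR13]
      field_simp
    · show x 3 = p₁ / c *
        ((1 - 1 / (α₁ * p₁ / (c * δ₁))) /
          (1 + p₂ / q₂ * (α₂ * q₂ / (c * δ₂)) / (α₁ * p₁ / (c * δ₁) - α₂ * q₂ / (c * δ₂))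
            + p₂ * q₃ / (q₂ * r₃) * (α₂ * q₂ / (c * δ₂) * (α₃ * r₃ / (c * δ₃)) /
              ((α₁ * p₁ / (c * δ₁) - α₂ * q₂ / (c * δ₂)) *
                (α₁ * p₁ / (c * δ₁) - α₃ * r₃ / (c * δ₃))))))
      rw [← Hy1, Hx3rel]
      field_simp
    · show x 4 = (p₂ * ((1 - 1 / (α₁ * p₁ / (c * δ₁))) /
          (1 + p₂ / q₂ * (α₂ * q₂ / (c * δ₂)) / (α₁ * p₁ / (c * δ₁) - α₂ * q₂ / (c * δ₂))
            + p₂ * q₃ / (q₂ * r₃) * (α₂ * q₂ / (c * δ₂) * (α₃ * r₃ / (c * δ₃)) /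
              ((α₁ * p₁ / (c * δ₁) - α₂ * q₂ / (c * δ₂)) *
                (α₁ * p₁ / (c * δ₁) - α₃ * r₃ / (c * δ₃))))))
        + q₂ * (p₂ / q₂ * (α₂ * q₂ / (c * δ₂) / (α₁ * p₁ / (c * δ₁) - α₂ * q₂ / (c * δ₂))) *
          ((1 - 1 / (α₁ * p₁ / (c * δ₁))) /
            (1 + p₂ / q₂ * (α₂ * q₂ / (c * δ₂)) / (α₁ * p₁ / (c * δ₁) - α₂ * q₂ / (c * δ₂))
              + p₂ * q₃ / (q₂ * r₃) * (α₂ * q₂ / (c * δ₂) * (α₃ * r₃ / (c * δ₃)) /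
                ((α₁ * p₁ / (c * δ₁) - α₂ * q₂ / (c * δ₂)) *
                  (α₁ * p₁ / (c * δ₁) - α₃ * r₃ / (c * δ₃)))))))) / c
      rw [← Hy1, Hx4rel, Hx1rel, hR12]
      field_simp
    · show x 5 = (q₃ * (p₂ / q₂ * (α₂ * q₂ / (c * δ₂) / (α₁ * p₁ / (c * δ₁) - α₂ * q₂ / (c * δ₂))) *
          ((1 - 1 / (α₁ * p₁ / (c * δ₁))) /
            (1 + p₂ / q₂ * (α₂ * q₂ / (c * δ₂)) / (α₁ * p₁ / (c * δ₁) - α₂ * q₂ / (c * δ₂))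
              + p₂ * q₃ / (q₂ * r₃) * (α₂ * q₂ / (c * δ₂) * (α₃ * r₃ / (c * δ₃)) /
                ((α₁ * p₁ / (c * δ₁) - α₂ * q₂ / (c * δ₂)) *
                  (α₁ * p₁ / (c * δ₁) - α₃ * r₃ / (c * δ₃)))))))
        + r₃ * (p₂ * q₃ / (q₂ * r₃) * (α₂ * q₂ / (c * δ₂) * (α₃ * r₃ / (c * δ₃)) /
            ((α₁ * p₁ / (c * δ₁) - α₂ * q₂ / (c * δ₂)) *
              (α₁ * p₁ / (c * δ₁) - α₃ * r₃ / (c * δ₃)))) *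
          ((1 - 1 / (α₁ * p₁ / (c * δ₁))) /
            (1 + p₂ / q₂ * (α₂ * q₂ / (c * δ₂)) / (α₁ * p₁ / (c * δ₁) - α₂ * q₂ / (c * δ₂))
              + p₂ * q₃ / (q₂ * r₃) * (α₂ * q₂ / (c * δ₂) * (α₃ * r₃ / (c * δ₃)) /
                ((α₁ * p₁ / (c * δ₁) - α₂ * q₂ / (c * δ₂)) *
                  (α₁ * p₁ / (c * δ₁) - α₃ * r₃ / (c * δ₃)))))))) / c
      rw [← Hy1, Hx5rel, Hx2rel, Hx1rel, hR12, hR13]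
      field_simp
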